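/- The limit as R → ∞ (R real, R > 0) of the complex integral ∫₀^π i·sin(R·e^{iθ}) dθ equals −π. -/

import Mathlib

open Real Filter Complex Metric MeasureTheory


lemma lemA {R : ℝ} (hR : 0 < R) :
    ∫ θ in (0:ℝ)..(2*π), Complex.exp (Complex.I * ((R:ℂ) * Complex.exp (Complex.I * (θ:ℂ)))) = 2*π := by
  have hf : DiffContOnCl ℂ (fun z => Complex.exp (Complex.I * z)) (ball 0 R) :=
    (Complex.differentiable_exp.comp (differentiable_const _ |>.mul differentiable_id)).diffContOnCl
  have hw : (0:ℂ) ∈ ball (0:ℂ) R := by simpa using hR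
  have h := hf.circleIntegral_sub_inv_smul hw
  rw [circleIntegral] at h
  simp only [circleMap, deriv_circleMap, zero_add, sub_zero, smul_eq_mul, mul_zero,
    Complex.exp_zero, mul_one] at h
  have key : ∀ θ : ℝ, ((R:ℂ) * Complex.exp (θ * Complex.I) * Complex.I) *
      (((R:ℂ) * Complex.exp (θ * Complex.I))⁻¹ * Complex.exp (Complex.I * ((R:ℂ) * Complex.exp (θ * Complex.I))))
      = Complex.I * Complex.exp (Complex.I * ((R:ℂ) * Complex.exp (Complex.I * θ))) := by
    intro θ
    have hne : (R:ℂ) * Complex.exp (θ * Complex.I) ≠ 0 := by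
      apply mul_ne_zero
      · exact_mod_cast hR.ne'
      · exact Complex.exp_ne_zero _
    field_simp
    ring_nf
    exact mul_inv_cancel₀ (by exact_mod_cast hR.ne')
  rw [intervalIntegral.integral_congr (fun θ _ => key θ),
    intervalIntegral.integral_const_mul] at h
  exact mul_left_cancel₀ Complex.I_ne_zero (h.trans (by ring))


lemma lemB0 : Tendsto (fun R : ℝ => ∫ θ in (0:ℝ)..π, Real.exp (-R * Real.sin θ))
    atTop (nhds 0) := by
  have main : Tendsto (fun R : ℝ => ∫ θ in (0:ℝ)..π, Real.exp (-R * Real.sin θ))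
      atTop (nhds (∫ θ in (0:ℝ)..π, (0:ℝ))) := by
    refine intervalIntegral.tendsto_integral_filter_of_dominated_convergence
        (l := atTop) (F := fun (R : ℝ) (θ : ℝ) => Real.exp (-R * Real.sin θ))
        (f := fun _ => (0:ℝ)) (fun _ => (1:ℝ)) ?_ ?_ ?_ ?_
    · filter_upwards with R
      exact (Real.continuous_exp.comp (by continuity)).aestronglyMeasurable
    · filter_upwards [eventually_ge_atTop (0:ℝ)] with R hR
      filter_upwards with θ hθ
      rw [Set.uIoc_of_le Real.pi_pos.le] at hθ
      rw [Real.norm_eq_abs, abs_of_pos (Real.exp_pos _),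
        show (1:ℝ) = Real.exp 0 by simp]
      apply Real.exp_le_exp.2
      have := Real.sin_nonneg_of_nonneg_of_le_pi hθ.1.le hθ.2
      nlinarith
    · exact intervalIntegrable_const
    · have hne : ∀ᵐ x : ℝ, x ≠ π := by
        rw [ae_iff]
        simp only [ne_eq, not_not]
        have : {x : ℝ | x = π} = {π} := by ext x; simp
        rw [this]; exact Real.volume_singleton
      filter_upwards [hne] with θ hθne hθ
      rw [Set.uIoc_of_le Real.pi_pos.le] at hθ
      have hs : 0 < Real.sin θ :=
        Real.sin_pos_of_pos_of_lt_pi hθ.1 (lt_of_le_of_ne hθ.2 hθne)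
      have : Tendsto (fun R : ℝ => -R * Real.sin θ) atTop atBot := by
        apply Tendsto.atBot_mul_const hs
        exact tendsto_neg_atBot_iff.2 tendsto_id
      exact Real.tendsto_exp_atBot.comp this
  rwa [intervalIntegral.integral_zero] at main

lemma lemB : Tendsto (fun R : ℝ =>
    ∫ θ in (0:ℝ)..π, Complex.exp (Complex.I * ((R:ℂ) * Complex.exp (Complex.I * (θ:ℂ)))))
    atTop (nhds 0) := by
  refine squeeze_zero_norm (fun R => ?_) lemB0
  calc ‖∫ θ in (0:ℝ)..π, Complex.exp (Complex.I * ((R:ℂ) * Complex.exp (Complex.I * (θ:ℂ))))‖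
      ≤ ∫ θ in (0:ℝ)..π, ‖Complex.exp (Complex.I * ((R:ℂ) * Complex.exp (Complex.I * (θ:ℂ))))‖ :=
        intervalIntegral.norm_integral_le_integral_norm Real.pi_pos.le
    _ = ∫ θ in (0:ℝ)..π, Real.exp (-R * Real.sin θ) := by
        apply intervalIntegral.integral_congr
        intro θ _
        have : (Complex.I * ((R:ℂ) * Complex.exp (Complex.I * (θ:ℂ)))).re
            = -R * Real.sin θ := by
          rw [mul_comm Complex.I (θ:ℂ)]
          simp [Complex.mul_re, Complex.mul_im]
        simp only [Complex.norm_exp, this]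


lemma lemC {R : ℝ} (hR : 0 < R) :
    (∫ θ in (0:ℝ)..π,
        Complex.I * Complex.sin ((R : ℂ) * Complex.exp (Complex.I * (θ : ℂ))))
      = (∫ θ in (0:ℝ)..π, Complex.exp (Complex.I * ((R:ℂ) * Complex.exp (Complex.I * (θ:ℂ))))) - π := by
  set f : ℝ → ℂ := fun θ => Complex.exp (Complex.I * ((R:ℂ) * Complex.exp (Complex.I * (θ:ℂ)))) with hf
  have hcont : Continuous f := by
    apply Complex.continuous_exp.comp
    continuity
  have hint : ∀ a b : ℝ, IntervalIntegrable f volume a b :=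
    fun a b => hcont.intervalIntegrable a b
  have hptwise : ∀ θ : ℝ,
      Complex.I * Complex.sin ((R : ℂ) * Complex.exp (Complex.I * (θ : ℂ)))
      = (f θ - f (θ + π)) / 2 := by
    intro θ
    have h1 : f (θ + π) = Complex.exp (-(Complex.I * ((R:ℂ) * Complex.exp (Complex.I * (θ:ℂ))))) := by
      simp only [hf]
      congr 1
      push_cast
      rw [mul_add, Complex.exp_add, mul_comm Complex.I (π:ℂ), Complex.exp_pi_mul_I]
      ring
    rw [h1, Complex.sin]
    simp only [hf]
    ring_nf
    rw [Complex.I_sq]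
    ring
  rw [intervalIntegral.integral_congr (fun θ _ => hptwise θ)]
  have hsplit : ∫ θ in (0:ℝ)..π, (f θ - f (θ + π)) / 2
      = ((∫ θ in (0:ℝ)..π, f θ) - ∫ θ in (0:ℝ)..π, f (θ + π)) / 2 := by
    rw [intervalIntegral.integral_div, intervalIntegral.integral_sub (hint 0 π)]
    exact (hcont.comp (continuous_add_right π)).intervalIntegrable 0 π
  rw [hsplit, intervalIntegral.integral_comp_add_right f π]
  have hadj : (∫ θ in (0:ℝ)..π, f θ) + (∫ θ in (π:ℝ)..(π+π), f θ)
      = ∫ θ in (0:ℝ)..(2*π), f θ := by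
    rw [two_mul]
    exact intervalIntegral.integral_add_adjacent_intervals (hint 0 π) (hint π (π+π))
  have h2 : (∫ θ in (π:ℝ)..(π+π), f θ) = 2*π - ∫ θ in (0:ℝ)..π, f θ := by
    have this' : (∫ θ in (0:ℝ)..(2*π), f θ) = 2*(π:ℂ) := lemA hR
    linear_combination hadj + this'
  rw [zero_add, h2]
  ring

theorem contour_integral_sin_z_over_z_semicircle :
    Tendsto (fun R : ℝ =>
      ∫ θ in (0:ℝ)..π,
        Complex.I * Complex.sin ((R : ℂ) * Complex.exp (Complex.I * (θ : ℂ))))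
      atTop (nhds (-(π : ℂ))) := by
  have h : Tendsto (fun R : ℝ =>
      (∫ θ in (0:ℝ)..π, Complex.exp (Complex.I * ((R:ℂ) * Complex.exp (Complex.I * (θ:ℂ))))) - (π:ℂ))
      atTop (nhds (0 - π)) := lemB.sub_const _
  rw [zero_sub] at h
  apply h.congr'
  filter_upwards [eventually_gt_atTop (0:ℝ)] with R hR
  exact (lemC hR).symm
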